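/- arXiv:2401.05599 — 7 statements merged into one kernel-verified Lean document; each statement's English description precedes it below -/
import Mathlib

section
/- Assume ρw ≤ ρn and δn ≤ δw. Then for all x ≥ 0, y ≥ 0 with x + y > 0, the total growth rate satisfies F₁(x,y) + F₂(x,y) ≤ (x+y)·(ρn·exp(−σ·(x+y)) − δn). Consequently, if additionally Q_x > 1 and x + y > (1/σ)·ln Q_x, then F₁(x,y) + F₂(x,y) < 0; in particular the set Ω = {(x,y) ∈ ℝ₊² : x + y ≤ (1/σ)·ln Q_x} is an absorbing (forward invariant, attracting) region for the total population x + y. -/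
/-- First component of the uncontrolled vector field. -/
noncomputable def F1 (ρn ρw δn σ ν η ω : ℝ) (x y : ℝ) : ℝ :=
  (ρn * x * (x + (1 - η) * y) / (x + y) + (1 - ν) * ρw * y) * Real.exp (-σ * (x + y))
    + ω * y - δn * x

/-- Second component of the uncontrolled vector field. -/
noncomputable def F2 (ρw δw σ ν ω : ℝ) (x y : ℝ) : ℝ :=
  ν * ρw * y * Real.exp (-σ * (x + y)) - ω * y - δw * y

/-- under ρw ≤ ρn and δn ≤ δw, the total growth rate satisfies
F₁+F₂ ≤ (x+y)·(ρn·exp(−σ(x+y)) − δn) on the positive quadrant; consequently,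
if Q_x > 1 and x+y > (1/σ)·ln Q_x, then F₁+F₂ < 0 (so Ω is absorbing for the
total population). -/
theorem total_population_dissipative
    (ρn ρw δn δw σ ν η ω : ℝ)
    (hρn : 0 < ρn) (hρw : 0 < ρw) (hδn : 0 < δn) (hδw : 0 < δw) (hσ : 0 < σ)
    (hν0 : 0 ≤ ν) (hν1 : ν ≤ 1) (hη0 : 0 ≤ η) (hη1 : η ≤ 1) (hω : 0 ≤ ω)
    (hρ : ρw ≤ ρn) (hδ : δn ≤ δw) :
    (∀ x y : ℝ, 0 ≤ x → 0 ≤ y → 0 < x + y →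
      F1 ρn ρw δn σ ν η ω x y + F2 ρw δw σ ν ω x y
        ≤ (x + y) * (ρn * Real.exp (-σ * (x + y)) - δn)) ∧
    (ρn / δn > 1 →
      ∀ x y : ℝ, 0 ≤ x → 0 ≤ y → (1 / σ) * Real.log (ρn / δn) < x + y →
        F1 ρn ρw δn σ ν η ω x y + F2 ρw δw σ ν ω x y < 0) := by
  have key : ∀ x y : ℝ, 0 ≤ x → 0 ≤ y → 0 < x + y →
      F1 ρn ρw δn σ ν η ω x y + F2 ρw δw σ ν ω x y
        ≤ (x + y) * (ρn * Real.exp (-σ * (x + y)) - δn) := by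
    intro x y hx hy hs
    unfold F1 F2
    have hE := Real.exp_pos (-σ * (x + y))
    have h1 : ρn * x * (x + (1 - η) * y) / (x + y) ≤ ρn * x := by
      rw [div_le_iff₀ hs]
      nlinarith [mul_nonneg (mul_nonneg hρn.le hx) (mul_nonneg hη0 hy)]
    nlinarith [mul_le_mul_of_nonneg_right h1 hE.le,
      mul_nonneg hy hE.le, mul_nonneg (mul_nonneg hy hE.le) (sub_nonneg.2 hρ),
      mul_nonneg hy (sub_nonneg.2 hδ)]
  refine ⟨key, fun hQ x y hx hy hs => ?_⟩
  have hlog : 0 < Real.log (ρn / δn) := Real.log_pos hQ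
  have hs0 : 0 < x + y := lt_of_le_of_lt (by positivity) hs
  have hexp : Real.exp (-σ * (x + y)) < δn / ρn := by
    have h2 : Real.log (ρn / δn) < σ * (x + y) := by
      have h := mul_lt_mul_of_pos_left hs hσ
      rw [← mul_assoc, mul_one_div, div_self hσ.ne', one_mul] at h
      exact h
    have : -σ * (x + y) < Real.log (δn / ρn) := by
      rw [Real.log_div hδn.ne' hρn.ne', Real.log_div hρn.ne' hδn.ne'] at *
      linarith
    calc Real.exp (-σ * (x + y)) < Real.exp (Real.log (δn / ρn)) := Real.exp_lt_exp.2 this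
      _ = δn / ρn := Real.exp_log (by positivity)
  have := key x y hx hy hs0
  have h3 : ρn * Real.exp (-σ * (x + y)) - δn < 0 := by
    have := (lt_div_iff₀' hρn).1 hexp
    linarith
  calc F1 ρn ρw δn σ ν η ω x y + F2 ρw δw σ ν ω x y ≤ _ := this
    _ < 0 := mul_neg_of_pos_of_neg hs0 h3
end

section
/- Assume ρw ≤ ρn, δn ≤ δw, and let L ≥ 0 and T > 0. Let x, y : [0,T] → ℝ be differentiable functions with x(t) ≥ 0, y(t) ≥ 0, x(t) + y(t) > 0 for all t ∈ [0,T], satisfying x'(t) = F₁(x(t), y(t)) and y'(t) = F₂(x(t), y(t)) + u(t) with 0 ≤ u(t) ≤ L for all t ∈ [0,T]. Then for every t ∈ [0,T], x(t) + y(t) ≤ max( x(0) + y(0), (ρn/(σ·e) + L)/δn ); i.e. solutions of the controlled system with bounded control remain bounded. -/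
lemma aux_zexp (σ z : ℝ) (hσ : 0 < σ) : z * Real.exp (-σ * z) ≤ 1 / (σ * Real.exp 1) := by
  have h1 : σ * z ≤ Real.exp (σ * z - 1) := by
    have := Real.add_one_le_exp (σ * z - 1); linarith
  have hp : 0 < Real.exp (-σ * z) := Real.exp_pos _
  have h2 : σ * z * Real.exp (-σ * z) ≤ Real.exp (-(1:ℝ)) := by
    calc σ * z * Real.exp (-σ * z) ≤ Real.exp (σ * z - 1) * Real.exp (-σ * z) := by nlinarith
      _ = Real.exp (-(1:ℝ)) := by rw [← Real.exp_add]; ring_nf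
  have h3 : Real.exp (-(1:ℝ)) * Real.exp 1 = 1 := by rw [← Real.exp_add]; simp
  rw [le_div_iff₀ (by positivity)]
  nlinarith [Real.exp_pos 1]

/-- solutions of the controlled system with bounded control
0 ≤ u(t) ≤ L remain bounded: x(t)+y(t) ≤ max(x(0)+y(0), (ρn/(σe)+L)/δn). -/
theorem controlled_solutions_bounded
    (ρn ρw δn δw σ ν η ω : ℝ)
    (hρn : 0 < ρn) (hρw : 0 < ρw) (hδn : 0 < δn) (hδw : 0 < δw) (hσ : 0 < σ)
    (hν0 : 0 ≤ ν) (hν1 : ν ≤ 1) (hη0 : 0 ≤ η) (hη1 : η ≤ 1) (hω : 0 ≤ ω)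
    (hρ : ρw ≤ ρn) (hδ : δn ≤ δw)
    (L : ℝ) (hL : 0 ≤ L) (T : ℝ) (hT : 0 < T)
    (x y u : ℝ → ℝ)
    (hx0 : ∀ t ∈ Set.Icc (0 : ℝ) T, 0 ≤ x t)
    (hy0 : ∀ t ∈ Set.Icc (0 : ℝ) T, 0 ≤ y t)
    (hxy : ∀ t ∈ Set.Icc (0 : ℝ) T, 0 < x t + y t)
    (hu : ∀ t ∈ Set.Icc (0 : ℝ) T, 0 ≤ u t ∧ u t ≤ L)
    (hx' : ∀ t ∈ Set.Icc (0 : ℝ) T, HasDerivAt x (F1 ρn ρw δn σ ν η ω (x t) (y t)) t)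
    (hy' : ∀ t ∈ Set.Icc (0 : ℝ) T, HasDerivAt y (F2 ρw δw σ ν ω (x t) (y t) + u t) t) :
    ∀ t ∈ Set.Icc (0 : ℝ) T,
      x t + y t ≤ max (x 0 + y 0) ((ρn / (σ * Real.exp 1) + L) / δn) := by
  set K : ℝ := (ρn / (σ * Real.exp 1) + L) / δn with hKdef
  have hK : δn * K = ρn / (σ * Real.exp 1) + L := by
    field_simp [hKdef]
    rw [hKdef]; field_simp
  -- key differential inequality
  have key : ∀ t ∈ Set.Icc (0 : ℝ) T,
      F1 ρn ρw δn σ ν η ω (x t) (y t) + (F2 ρw δw σ ν ω (x t) (y t) + u t)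
        + δn * (x t + y t) ≤ δn * K := by
    intro t ht
    set X := x t
    set Y := y t
    have hX : 0 ≤ X := hx0 t ht
    have hY : 0 ≤ Y := hy0 t ht
    have hN : 0 < X + Y := hxy t ht
    have hE : 0 < Real.exp (-σ * (X + Y)) := Real.exp_pos _
    have hu1 := (hu t ht).1
    have hu2 := (hu t ht).2
    have hdiv : X * (X + (1 - η) * Y) / (X + Y) ≤ X := by
      rw [div_le_iff₀ hN]; nlinarith [mul_nonneg (mul_nonneg hX hη0) hY]
    have hNE : (X + Y) * Real.exp (-σ * (X + Y)) ≤ 1 / (σ * Real.exp 1) :=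
      aux_zexp σ (X + Y) hσ
    have hρnNE : ρn * ((X + Y) * Real.exp (-σ * (X + Y))) ≤ ρn * (1 / (σ * Real.exp 1)) :=
      mul_le_mul_of_nonneg_left hNE hρn.le
    have hdiv2 : ρn * (X * (X + (1 - η) * Y) / (X + Y)) * Real.exp (-σ * (X + Y))
        ≤ ρn * X * Real.exp (-σ * (X + Y)) := by
      have := mul_le_mul_of_nonneg_left hdiv hρn.le
      nlinarith
    have heq : ρn * X * (X + (1 - η) * Y) / (X + Y)
        = ρn * (X * (X + (1 - η) * Y) / (X + Y)) := by ring
    rw [hK, F1, F2, heq]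
    have hρwY : ρw * Y * Real.exp (-σ * (X + Y)) ≤ ρn * Y * Real.exp (-σ * (X + Y)) := by
      nlinarith [mul_nonneg (mul_nonneg (sub_nonneg.2 hρ) hY) hE.le]
    have hδY : 0 ≤ (δw - δn) * Y := mul_nonneg (sub_nonneg.2 hδ) hY
    have hexpand : (ρn * (X * (X + (1 - η) * Y) / (X + Y)) + (1 - ν) * ρw * Y)
          * Real.exp (-σ * (X + Y)) + ω * Y - δn * X
        + (ν * ρw * Y * Real.exp (-σ * (X + Y)) - ω * Y - δw * Y + u t) + δn * (X + Y)
        = ρn * (X * (X + (1 - η) * Y) / (X + Y)) * Real.exp (-σ * (X + Y))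
          + ρw * Y * Real.exp (-σ * (X + Y)) + (δn - δw) * Y + u t := by ring
    have hsum : ρn * X * Real.exp (-σ * (X + Y)) + ρn * Y * Real.exp (-σ * (X + Y))
        = ρn * ((X + Y) * Real.exp (-σ * (X + Y))) := by ring
    have hfin : ρn * (1 / (σ * Real.exp 1)) = ρn / (σ * Real.exp 1) := by ring
    rw [hexpand]
    linarith [hdiv2, hρwY, hρnNE, hδY, hu2]
  -- the weighted function W
  set W : ℝ → ℝ := fun t => Real.exp (δn * t) * (x t + y t - K) with hWdef
  have hWderiv : ∀ t ∈ Set.Icc (0 : ℝ) T,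
      HasDerivAt W (Real.exp (δn * t) * δn * (x t + y t - K)
        + Real.exp (δn * t) * (F1 ρn ρw δn σ ν η ω (x t) (y t)
          + (F2 ρw δw σ ν ω (x t) (y t) + u t))) t := by
    intro t ht
    have hE : HasDerivAt (fun s => Real.exp (δn * s)) (Real.exp (δn * t) * δn) t := by
      simpa using ((hasDerivAt_id t).const_mul δn).exp
    have hN : HasDerivAt (fun s => x s + y s - K)
        (F1 ρn ρw δn σ ν η ω (x t) (y t) + (F2 ρw δw σ ν ω (x t) (y t) + u t)) t :=
      ((hx' t ht).add (hy' t ht)).sub_const K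
    exact hE.mul hN
  have hanti : AntitoneOn W (Set.Icc 0 T) := by
    apply antitoneOn_of_deriv_nonpos (convex_Icc 0 T)
    · intro t ht
      exact (hWderiv t ht).continuousAt.continuousWithinAt
    · intro t ht
      rw [interior_Icc] at ht
      exact (hWderiv t (Set.Ioo_subset_Icc_self ht)).differentiableAt.differentiableWithinAt
    · intro t ht
      rw [interior_Icc] at ht
      have ht' := Set.Ioo_subset_Icc_self ht
      rw [(hWderiv t ht').deriv]
      have hk := key t ht'
      have hE : 0 < Real.exp (δn * t) := Real.exp_pos _
      nlinarith
  intro t ht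
  have h0 : (0 : ℝ) ∈ Set.Icc (0 : ℝ) T := ⟨le_refl 0, hT.le⟩
  have hWle : W t ≤ W 0 := hanti h0 ht ht.1
  have hW0 : W 0 = x 0 + y 0 - K := by simp [hWdef]
  have hexp1 : (1 : ℝ) ≤ Real.exp (δn * t) := by
    exact Real.one_le_exp (mul_nonneg hδn.le ht.1)
  rw [hW0] at hWle
  simp only [hWdef] at hWle
  rcases le_or_gt (x t + y t) K with h | h
  · exact le_max_of_le_right h
  · apply le_max_of_le_left
    nlinarith
end

section
/- Assume ρw ≤ ρn, δn ≤ δw, and Q_x > 1, and let T > 0. Let x, y : [0,T] → ℝ be differentiable functions with x(t) ≥ 0, y(t) ≥ 0, x(t) + y(t) > 0 for all t ∈ [0,T], satisfying the uncontrolled system x'(t) = F₁(x(t), y(t)) and y'(t) = F₂(x(t), y(t)). If x(0) + y(0) ≤ (1/σ)·ln Q_x, then x(t) + y(t) ≤ (1/σ)·ln Q_x for all t ∈ [0,T]; i.e. the set Ω = {(x,y) ∈ ℝ₊² : x + y ≤ (1/σ)·ln Q_x} is forward invariant. -/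
/-- the region Ω = {(x,y) ∈ ℝ₊² : x+y ≤ (1/σ)·ln Q_x} is forward
invariant for the uncontrolled system. -/
theorem absorbing_set_forward_invariant
    (ρn ρw δn δw σ ν η ω : ℝ)
    (hρn : 0 < ρn) (hρw : 0 < ρw) (hδn : 0 < δn) (hδw : 0 < δw) (hσ : 0 < σ)
    (hν0 : 0 ≤ ν) (hν1 : ν ≤ 1) (hη0 : 0 ≤ η) (hη1 : η ≤ 1) (hω : 0 ≤ ω)
    (hρ : ρw ≤ ρn) (hδ : δn ≤ δw) (hQx : ρn / δn > 1)
    (T : ℝ) (hT : 0 < T)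
    (x y : ℝ → ℝ)
    (hx0 : ∀ t ∈ Set.Icc (0 : ℝ) T, 0 ≤ x t)
    (hy0 : ∀ t ∈ Set.Icc (0 : ℝ) T, 0 ≤ y t)
    (hxy : ∀ t ∈ Set.Icc (0 : ℝ) T, 0 < x t + y t)
    (hx' : ∀ t ∈ Set.Icc (0 : ℝ) T, HasDerivAt x (F1 ρn ρw δn σ ν η ω (x t) (y t)) t)
    (hy' : ∀ t ∈ Set.Icc (0 : ℝ) T, HasDerivAt y (F2 ρw δw σ ν ω (x t) (y t)) t)
    (h0 : x 0 + y 0 ≤ (1 / σ) * Real.log (ρn / δn)) :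
    ∀ t ∈ Set.Icc (0 : ℝ) T, x t + y t ≤ (1 / σ) * Real.log (ρn / δn) := by
  set M : ℝ := (1 / σ) * Real.log (ρn / δn) with hM
  have hMpos : 0 < M := mul_pos (by positivity) (Real.log_pos hQx)
  set g : ℝ → ℝ := fun t => x t + y t with hg
  set d : ℝ → ℝ := fun t =>
    F1 ρn ρw δn σ ν η ω (x t) (y t) + F2 ρw δw σ ν ω (x t) (y t) with hd
  have hgd : ∀ t ∈ Set.Icc (0 : ℝ) T, HasDerivAt g (d t) t := fun t ht =>
    (hx' t ht).add (hy' t ht)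
  have hcont : ∀ t ∈ Set.Icc (0 : ℝ) T, ContinuousAt g t := fun t ht =>
    (hgd t ht).continuousAt
  have key : ∀ t ∈ Set.Icc (0 : ℝ) T, M < g t → d t < 0 := by
    intro t ht hMlt
    have hx := hx0 t ht
    have hy := hy0 t ht
    have hsum : 0 < x t + y t := hxy t ht
    set X := x t with hX
    set Y := y t with hY
    set E := Real.exp (-σ * (X + Y)) with hE
    have hEpos : 0 < E := Real.exp_pos _
    have hMltN : M < X + Y := hMlt
    have hElt : E < δn / ρn := by
      have h1 : Real.log (ρn / δn) < σ * (X + Y) := by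
        have h2 : Real.log (ρn / δn) = σ * M := by
          rw [hM]; field_simp
        rw [h2]
        exact mul_lt_mul_of_pos_left hMltN hσ
      have h3 : -σ * (X + Y) < -Real.log (ρn / δn) := by linarith
      calc E < Real.exp (-Real.log (ρn / δn)) := Real.exp_lt_exp.mpr h3
        _ = δn / ρn := by
            rw [Real.exp_neg, Real.exp_log (by positivity), inv_div]
    have hA : ρn * X * (X + (1 - η) * Y) / (X + Y) ≤ ρn * X := by
      rw [div_le_iff₀ hsum]
      nlinarith [mul_nonneg (mul_nonneg hρn.le hx) (mul_nonneg hη0 hy)]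
    have hB : ρn * X * (X + (1 - η) * Y) / (X + Y) + ρw * Y ≤ ρn * (X + Y) := by
      nlinarith
    have hNpos : 0 < X + Y := hsum
    have hEprod : (ρn * X * (X + (1 - η) * Y) / (X + Y) + ρw * Y) * E < δn * (X + Y) := by
      have h1 : (ρn * X * (X + (1 - η) * Y) / (X + Y) + ρw * Y) * E ≤ ρn * (X + Y) * E :=
        mul_le_mul_of_nonneg_right hB hEpos.le
      have h2 : ρn * (X + Y) * E < ρn * (X + Y) * (δn / ρn) :=
        mul_lt_mul_of_pos_left hElt (by positivity)
      have h3 : ρn * (X + Y) * (δn / ρn) = δn * (X + Y) := by field_simp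
      linarith
    have hF : d t = (ρn * X * (X + (1 - η) * Y) / (X + Y) + ρw * Y) * E - δn * X - δw * Y := by
      simp only [hd, F1, F2, ← hX, ← hY, ← hE]
      ring
    rw [hF]
    nlinarith [mul_nonneg (sub_nonneg.mpr hδ) hy]
  by_contra hcon
  push_neg at hcon
  obtain ⟨t1, ht1, hgt1⟩ := hcon
  have hgt1 : M < g t1 := hgt1
  set S := {t | t ∈ Set.Icc (0 : ℝ) t1 ∧ g t ≤ M} with hS
  have h0S : (0 : ℝ) ∈ S := ⟨⟨le_refl 0, ht1.1⟩, h0⟩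
  have hSne : S.Nonempty := ⟨0, h0S⟩
  have hSbdd : BddAbove S := ⟨t1, fun t ht => ht.1.2⟩
  set s := sSup S with hs
  have hsmem : s ∈ Set.Icc (0 : ℝ) t1 :=
    ⟨le_csSup hSbdd h0S, csSup_le hSne fun t ht => ht.1.2⟩
  have hsT : s ∈ Set.Icc (0 : ℝ) T := ⟨hsmem.1, hsmem.2.trans ht1.2⟩
  have hgs : g s ≤ M := by
    have hcl : s ∈ closure S := csSup_mem_closure hSne hSbdd
    have hne : (nhdsWithin s S).NeBot := mem_closure_iff_nhdsWithin_neBot.mp hcl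
    exact le_of_tendsto ((hcont s hsT).continuousWithinAt)
      (eventually_nhdsWithin_of_forall fun t (ht : t ∈ S) => ht.2)
  have hst1 : s < t1 := lt_of_le_of_ne hsmem.2 (fun h => by rw [h] at hgs; linarith)
  have hgt : ∀ c ∈ Set.Ioc s t1, M < g c := by
    intro c hc
    by_contra h
    push_neg at h
    have hcS : c ∈ S := ⟨⟨hsmem.1.trans hc.1.le, hc.2⟩, h⟩
    exact absurd (le_csSup hSbdd hcS) (not_le.mpr hc.1)
  have hsub : Set.Icc s t1 ⊆ Set.Icc (0 : ℝ) T := fun u hu =>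
    ⟨hsmem.1.trans hu.1, hu.2.trans ht1.2⟩
  obtain ⟨c, hc, hceq⟩ := exists_hasDerivAt_eq_slope g d hst1
    (fun u hu => (hcont u (hsub hu)).continuousWithinAt)
    (fun u hu => hgd u (hsub ⟨hu.1.le, hu.2.le⟩))
  have hcT : c ∈ Set.Icc (0 : ℝ) T := hsub ⟨hc.1.le, hc.2.le⟩
  have hneg : d c < 0 := key c hcT (hgt c ⟨hc.1, hc.2.le⟩)
  rw [hceq] at hneg
  have hpos : 0 < t1 - s := sub_pos.mpr hst1
  have : g t1 - g s < 0 := by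
    have := div_neg_iff.mp hneg
    rcases this with ⟨h1, h2⟩ | ⟨h1, h2⟩
    · linarith
    · exact h1
  linarith
end

section
/- Assume Q_y > 1 and set h = (1/σ)·ln Q_y. Then for every x ∈ ℝ, the equilibrium condition F₁(x, h − x) = 0 holds if and only if x satisfies the quadratic equation η·Q_x·x² − Q_x·(Q_c − 1)·h·x + Q_{y,x}·h² = 0. -/
/-- with h = (1/σ)·ln Q_y (Q_y > 1), F₁(x, h−x) = 0 iff x solves
the quadratic η·Q_x·x² − Q_x·(Q_c − 1)·h·x + Q_{y,x}·h² = 0. -/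
theorem coexistence_equilibria_quadratic
    (ρn ρw δn δw σ ν η ω : ℝ)
    (hρn : 0 < ρn) (hρw : 0 < ρw) (hδn : 0 < δn) (hδw : 0 < δw) (hσ : 0 < σ)
    (hν0 : 0 ≤ ν) (hν1 : ν ≤ 1) (hη0 : 0 ≤ η) (hη1 : η ≤ 1) (hω : 0 ≤ ω)
    (hQy : ν * ρw / (ω + δw) > 1) :
    ∀ x : ℝ,
      (F1 ρn ρw δn σ ν η ω x ((1 / σ) * Real.log (ν * ρw / (ω + δw)) - x) = 0 ↔
        η * (ρn / δn) * x ^ 2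
          - (ρn / δn) *
              ((((1 - ν) * ρw + ω * (ν * ρw / (ω + δw))) / δn + ν * ρw / (ω + δw)
                  + η * (ρn / δn)) / (ρn / δn) - 1) *
              ((1 / σ) * Real.log (ν * ρw / (ω + δw))) * x
          + (((1 - ν) * ρw + ω * (ν * ρw / (ω + δw))) / δn) *
              ((1 / σ) * Real.log (ν * ρw / (ω + δw))) ^ 2 = 0) := by
  intro x
  set Qy : ℝ := ν * ρw / (ω + δw) with hQydef
  set h : ℝ := (1 / σ) * Real.log Qy with hhdef
  have hQy0 : (0:ℝ) < Qy := lt_trans one_pos hQy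
  have hlog : 0 < Real.log Qy := Real.log_pos hQy
  have hh : 0 < h := by
    rw [hhdef]; positivity
  have hxy : x + (h - x) = h := by ring
  have hexp : Real.exp (-σ * (x + (h - x))) = 1 / Qy := by
    rw [hxy]
    have : -σ * h = -Real.log Qy := by
      rw [hhdef]; field_simp
    rw [this, Real.exp_neg, Real.exp_log hQy0, one_div]
  have key : F1 ρn ρw δn σ ν η ω x (h - x) =
      δn * (η * (ρn / δn) * x ^ 2
          - (ρn / δn) *
              (((((1 - ν) * ρw + ω * Qy) / δn + Qy + η * (ρn / δn)) / (ρn / δn)) - 1) *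
              h * x
          + (((1 - ν) * ρw + ω * Qy) / δn) * h ^ 2) / (h * Qy) := by
    unfold F1
    rw [hexp, hxy]
    field_simp
    ring
  rw [key, div_eq_zero_iff, mul_eq_zero]
  constructor
  · rintro ((h1 | h1) | h1)
    · exact absurd h1 hδn.ne'
    · exact h1
    · exact absurd h1 (mul_pos hh hQy0).ne'
  · intro h1; exact Or.inl (Or.inr h1)
end

section
/- Assume Q_y > 1, η > 0, and D := (Q_c − 1)² − 4·η·Q_{y,x}/Q_x ≥ 0. Set h = (1/σ)·ln Q_y, x_u = (h/(2η))·((Q_c − 1) + √D), y_u = h − x_u, x_s = (h/(2η))·((Q_c − 1) − √D), y_s = h − x_s. Then both (x_u, y_u) and (x_s, y_s) are equilibria of the uncontrolled system: F₁(x_u, y_u) = F₂(x_u, y_u) = 0 and F₁(x_s, y_s) = F₂(x_s, y_s) = 0. -/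
lemma equilib_aux (ρn ρw δn δw σ ν η ω Qx Qy Qyx Qc h : ℝ)
    (hh : h ≠ 0) (hQy0 : (0:ℝ) < Qy)
    (e1 : Qx * δn = ρn) (e2 : Qy * (ω + δw) = ν * ρw)
    (e3 : Qyx * δn = (1 - ν) * ρw + ω * Qy)
    (e4 : Qc * Qx = Qyx + Qy + η * Qx)
    (hE : Real.exp (-σ * h) = 1 / Qy)
    (x y : ℝ) (hy : y = h - x)
    (hquad : η * x ^ 2 * Qx - (Qc - 1) * h * x * Qx + Qyx * h ^ 2 = 0) :
    F1 ρn ρw δn σ ν η ω x y = 0 ∧ F2 ρw δw σ ν ω x y = 0 := by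
  have hQyne : Qy ≠ 0 := ne_of_gt hQy0
  have hxy : x + y = h := by rw [hy]; ring
  constructor
  · have key : ρn * x * (x + (1 - η) * y)
        + ((1 - ν) * ρw * y + ω * y * Qy - δn * x * Qy) * h = 0 := by
      subst hy
      linear_combination δn * hquad + δn * h * x * e4
        - (x * (x + (1 - η) * (h - x))) * e1 - ((h - x) * h) * e3
    have expand : F1 ρn ρw δn σ ν η ω x y =
        (ρn * x * (x + (1 - η) * y)
          + ((1 - ν) * ρw * y + ω * y * Qy - δn * x * Qy) * h) / (h * Qy) := by
      rw [F1, hxy, hE]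
      field_simp
      ring
    rw [expand, key, zero_div]
  · rw [F2, hxy, hE]
    field_simp
    linear_combination -y * e2

/-- when Q_y > 1, η > 0 and the discriminant
D = (Q_c−1)² − 4ηQ_{y,x}/Q_x is nonnegative, the two points (x_u, y_u) and
(x_s, y_s) given by the quadratic formula are equilibria of the uncontrolled
system. -/
theorem coexistence_points_are_equilibria
    (ρn ρw δn δw σ ν η ω : ℝ)
    (hρn : 0 < ρn) (hρw : 0 < ρw) (hδn : 0 < δn) (hδw : 0 < δw) (hσ : 0 < σ)
    (hν0 : 0 ≤ ν) (hν1 : ν ≤ 1) (hη0 : 0 < η) (hη1 : η ≤ 1) (hω : 0 ≤ ω)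
    (Qx Qy Qyx Qc h D xu yu xs ys : ℝ)
    (hQxdef : Qx = ρn / δn)
    (hQydef : Qy = ν * ρw / (ω + δw))
    (hQyxdef : Qyx = ((1 - ν) * ρw + ω * Qy) / δn)
    (hQcdef : Qc = (Qyx + Qy + η * Qx) / Qx)
    (hQy : Qy > 1)
    (hhdef : h = (1 / σ) * Real.log Qy)
    (hDdef : D = (Qc - 1) ^ 2 - 4 * η * Qyx / Qx)
    (hD : 0 ≤ D)
    (hxu : xu = (h / (2 * η)) * ((Qc - 1) + Real.sqrt D)) (hyu : yu = h - xu)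
    (hxs : xs = (h / (2 * η)) * ((Qc - 1) - Real.sqrt D)) (hys : ys = h - xs) :
    F1 ρn ρw δn σ ν η ω xu yu = 0 ∧ F2 ρw δw σ ν ω xu yu = 0 ∧
    F1 ρn ρw δn σ ν η ω xs ys = 0 ∧ F2 ρw δw σ ν ω xs ys = 0 := by
  have hδnne : δn ≠ 0 := ne_of_gt hδn
  have hωδw : (0:ℝ) < ω + δw := by linarith
  have hQx : (0:ℝ) < Qx := by rw [hQxdef]; positivity
  have hQxne : Qx ≠ 0 := ne_of_gt hQx
  have hQy0 : (0:ℝ) < Qy := by linarith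
  have hQyne : Qy ≠ 0 := ne_of_gt hQy0
  have hηne : η ≠ 0 := ne_of_gt hη0
  have hh : (0:ℝ) < h := by
    rw [hhdef]
    have := Real.log_pos hQy
    positivity
  have hhne : h ≠ 0 := ne_of_gt hh
  have e1 : Qx * δn = ρn := by rw [hQxdef]; field_simp
  have e2 : Qy * (ω + δw) = ν * ρw := by rw [hQydef]; field_simp
  have e3 : Qyx * δn = (1 - ν) * ρw + ω * Qy := by rw [hQyxdef]; field_simp
  have e4 : Qc * Qx = Qyx + Qy + η * Qx := by rw [hQcdef]; field_simp
  have hE : Real.exp (-σ * h) = 1 / Qy := by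
    have hexp : -σ * h = -Real.log Qy := by
      rw [hhdef]; field_simp
    rw [hexp, Real.exp_neg, Real.exp_log hQy0, one_div]
  have hs : Real.sqrt D ^ 2 = D := Real.sq_sqrt hD
  have hDQx : D * Qx = (Qc - 1) ^ 2 * Qx - 4 * η * Qyx := by
    rw [hDdef]; field_simp
  have hxu2 : 2 * η * xu = h * ((Qc - 1) + Real.sqrt D) := by
    rw [hxu]; field_simp
  have hxs2 : 2 * η * xs = h * ((Qc - 1) - Real.sqrt D) := by
    rw [hxs]; field_simp
  have h4ne : (4 * η : ℝ) ≠ 0 := by positivity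
  have hquadu : η * xu ^ 2 * Qx - (Qc - 1) * h * xu * Qx + Qyx * h ^ 2 = 0 := by
    have h4 : 4 * η * (η * xu ^ 2 * Qx - (Qc - 1) * h * xu * Qx + Qyx * h ^ 2) = 0 := by
      linear_combination (Qx * (2 * η * xu + h * ((Qc - 1) + Real.sqrt D))
        - 2 * (Qc - 1) * h * Qx) * hxu2 + h ^ 2 * Qx * hs + h ^ 2 * hDQx
    exact (mul_eq_zero.mp h4).resolve_left h4ne
  have hquads : η * xs ^ 2 * Qx - (Qc - 1) * h * xs * Qx + Qyx * h ^ 2 = 0 := by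
    have h4 : 4 * η * (η * xs ^ 2 * Qx - (Qc - 1) * h * xs * Qx + Qyx * h ^ 2) = 0 := by
      linear_combination (Qx * (2 * η * xs + h * ((Qc - 1) - Real.sqrt D))
        - 2 * (Qc - 1) * h * Qx) * hxs2 + h ^ 2 * Qx * hs + h ^ 2 * hDQx
    exact (mul_eq_zero.mp h4).resolve_left h4ne
  obtain ⟨h1u, h2u⟩ := equilib_aux ρn ρw δn δw σ ν η ω Qx Qy Qyx Qc h
    hhne hQy0 e1 e2 e3 e4 hE xu yu hyu hquadu
  obtain ⟨h1s, h2s⟩ := equilib_aux ρn ρw δn δw σ ν η ω Qx Qy Qyx Qc h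
    hhne hQy0 e1 e2 e3 e4 hE xs ys hys hquads
  exact ⟨h1u, h2u, h1s, h2s⟩
end

section
/- Assume Q_x > 1 and set x♯ = (1/σ)·ln Q_x. Then the vector field F is Fréchet differentiable at the boundary equilibrium E_x = (x♯, 0), and its derivative there is represented by the upper-triangular matrix [[−δn·ln Q_x, b], [0, ν·ρw/Q_x − (ω + δw)]], where b = −η·δn + (1−ν)·ρw/Q_x − δn·ln Q_x + ω. In particular the eigenvalues of the Jacobian at E_x are −δn·ln Q_x and (ω + δw)·(Q_y − Q_x)/Q_x, and if moreover Q_x > Q_y then both eigenvalues are real and strictly negative (E_x is a nodal attractor of the linearization). -/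
/-- The linear map on ℝ² represented by the upper-triangular matrix
[[a, b], [0, d]]. -/
def upperTriangular (a b d : ℝ) : ℝ × ℝ →ₗ[ℝ] ℝ × ℝ where
  toFun p := (a * p.1 + b * p.2, d * p.2)
  map_add' p q := by
    simp only [Prod.fst_add, Prod.snd_add, Prod.mk_add_mk]
    exact Prod.ext (by ring) (by ring)
  map_smul' c p := by
    simp only [Prod.smul_fst, Prod.smul_snd, Prod.smul_mk, smul_eq_mul,
      RingHom.id_apply]
    exact Prod.ext (by ring) (by ring)

/-- F is Fréchet differentiable at E_x = (x♯, 0) with derivative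
represented by the upper-triangular matrix
[[−δn·ln Q_x, b], [0, ν·ρw/Q_x − (ω+δw)]] where
b = −η·δn + (1−ν)·ρw/Q_x − δn·ln Q_x + ω; its eigenvalues are −δn·ln Q_x and
(ω+δw)·(Q_y − Q_x)/Q_x, and they are strictly negative when Q_x > Q_y. -/
theorem jacobian_at_wolbachia_free_equilibrium
    (ρn ρw δn δw σ ν η ω : ℝ)
    (hρn : 0 < ρn) (hρw : 0 < ρw) (hδn : 0 < δn) (hδw : 0 < δw) (hσ : 0 < σ)
    (hν0 : 0 ≤ ν) (hν1 : ν ≤ 1) (hη0 : 0 ≤ η) (hη1 : η ≤ 1) (hω : 0 ≤ ω)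
    (hQx : ρn / δn > 1) :
    HasFDerivAt
      (fun p : ℝ × ℝ => (F1 ρn ρw δn σ ν η ω p.1 p.2, F2 ρw δw σ ν ω p.1 p.2))
      ((upperTriangular (-δn * Real.log (ρn / δn))
          (-η * δn + (1 - ν) * ρw / (ρn / δn) - δn * Real.log (ρn / δn) + ω)
          (ν * ρw / (ρn / δn) - (ω + δw))).toContinuousLinearMap)
      ((1 / σ) * Real.log (ρn / δn), 0) ∧
    Module.End.HasEigenvalue
      (upperTriangular (-δn * Real.log (ρn / δn))
        (-η * δn + (1 - ν) * ρw / (ρn / δn) - δn * Real.log (ρn / δn) + ω)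
        (ν * ρw / (ρn / δn) - (ω + δw)))
      (-δn * Real.log (ρn / δn)) ∧
    Module.End.HasEigenvalue
      (upperTriangular (-δn * Real.log (ρn / δn))
        (-η * δn + (1 - ν) * ρw / (ρn / δn) - δn * Real.log (ρn / δn) + ω)
        (ν * ρw / (ρn / δn) - (ω + δw)))
      ((ω + δw) * (ν * ρw / (ω + δw) - ρn / δn) / (ρn / δn)) ∧
    (ρn / δn > ν * ρw / (ω + δw) →
      -δn * Real.log (ρn / δn) < 0 ∧
      (ω + δw) * (ν * ρw / (ω + δw) - ρn / δn) / (ρn / δn) < 0) := by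
  have hQ0 : (0:ℝ) < ρn / δn := lt_trans one_pos hQx
  have hlog : 0 < Real.log (ρn / δn) := Real.log_pos hQx
  have hωδ : 0 < ω + δw := by linarith
  set a : ℝ := -δn * Real.log (ρn / δn) with ha
  set b : ℝ := -η * δn + (1 - ν) * ρw / (ρn / δn) - δn * Real.log (ρn / δn) + ω with hb
  set d : ℝ := ν * ρw / (ρn / δn) - (ω + δw) with hd
  have heq : (ω + δw) * (ν * ρw / (ω + δw) - ρn / δn) / (ρn / δn) = d := by
    rw [hd]; field_simp; try ring
  refine ⟨?_, ?_, ?_, ?_⟩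
  · -- derivative
    set c : ℝ := (1 / σ) * Real.log (ρn / δn) with hc
    have hc0 : 0 < c := by positivity
    have hcne : c ≠ 0 := ne_of_gt hc0
    have hexp : Real.exp (-σ * (c + 0)) = δn / ρn := by
      rw [add_zero, hc]
      have h1 : -σ * (1 / σ * Real.log (ρn / δn)) = -Real.log (ρn / δn) := by
        field_simp; try ring
      rw [h1, Real.exp_neg, Real.exp_log hQ0]
      rw [inv_div]
    have hfst : HasFDerivAt (fun p : ℝ × ℝ => p.1)
        (ContinuousLinearMap.fst ℝ ℝ ℝ) ((c, 0) : ℝ × ℝ) := hasFDerivAt_fst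
    have hsnd : HasFDerivAt (fun p : ℝ × ℝ => p.2)
        (ContinuousLinearMap.snd ℝ ℝ ℝ) ((c, 0) : ℝ × ℝ) := hasFDerivAt_snd
    have hsum := hfst.add hsnd
    have hinner := hsum.const_mul (-σ)
    have hE := hinner.exp
    have h1 := hfst.const_mul ρn
    have h2 := hfst.add (hsnd.const_mul (1 - η))
    have hn := h1.mul h2
    have hne : ((c, 0) : ℝ × ℝ).1 + ((c, 0) : ℝ × ℝ).2 ≠ 0 := by simpa using hcne
    have hinv := (hasDerivAt_inv hne).comp_hasFDerivAt ((c, 0) : ℝ × ℝ) hsum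
    have hdiv := hn.mul hinv
    have hg := hdiv.add (hsnd.const_mul ((1 - ν) * ρw))
    have hF1 := ((hg.mul hE).add (hsnd.const_mul ω)).sub (hfst.const_mul δn)
    have hF2 := (((hsnd.const_mul (ν * ρw)).mul hE).sub (hsnd.const_mul ω)).sub
        (hsnd.const_mul δw)
    have hF := HasFDerivAt.prodMk hF1 hF2
    have hFun : (fun p : ℝ × ℝ => (F1 ρn ρw δn σ ν η ω p.1 p.2, F2 ρw δw σ ν ω p.1 p.2)) =
        (fun p : ℝ × ℝ =>
          ((ρn * p.1 * (p.1 + (1 - η) * p.2) * (p.1 + p.2)⁻¹ + (1 - ν) * ρw * p.2) *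
              Real.exp (-σ * (p.1 + p.2)) + ω * p.2 - δn * p.1,
            ν * ρw * p.2 * Real.exp (-σ * (p.1 + p.2)) - ω * p.2 - δw * p.2)) := by
      funext p
      simp [F1, F2, div_eq_mul_inv]
    rw [hFun]
    refine hF.congr_fderiv ?_
    apply ContinuousLinearMap.ext
    intro p
    have hσc : σ * c = Real.log (ρn / δn) := by
      rw [hc]; field_simp; try ring
    simp only [ContinuousLinearMap.add_apply, ContinuousLinearMap.sub_apply,
      ContinuousLinearMap.smul_apply, ContinuousLinearMap.coe_fst',
      ContinuousLinearMap.coe_snd', ContinuousLinearMap.prod_apply, smul_eq_mul,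
      hexp, LinearMap.coe_toContinuousLinearMap', upperTriangular, LinearMap.coe_mk,
      AddHom.coe_mk]
    simp only [Function.comp, Pi.add_apply, Pi.mul_apply, hexp]
    rw [Prod.mk.injEq, ha, hb, hd, ← hσc]
    constructor <;> field_simp <;> ring
  · -- eigenvalue a
    apply Module.End.hasEigenvalue_of_hasEigenvector (x := ((1:ℝ), (0:ℝ)))
    constructor
    · rw [Module.End.mem_eigenspace_iff]
      show ((a * 1 + b * 0, d * 0) : ℝ × ℝ) = a • (1, 0)
      simp
    · simp [Prod.ext_iff]
  · -- eigenvalue d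
    rw [heq]
    rcases eq_or_ne a d with h | h
    · rw [← h]
      apply Module.End.hasEigenvalue_of_hasEigenvector (x := ((1:ℝ), (0:ℝ)))
      exact ⟨Module.End.mem_eigenspace_iff.2
        (by show ((a * 1 + b * 0, a * 0) : ℝ × ℝ) = a • (1, 0); simp),
        by simp [Prod.ext_iff]⟩
    · apply Module.End.hasEigenvalue_of_hasEigenvector (x := (b / (d - a), (1:ℝ)))
      constructor
      · rw [Module.End.mem_eigenspace_iff]
        show ((a * (b / (d - a)) + b * 1, d * 1) : ℝ × ℝ) = d • (b / (d - a), 1)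
        have hda : d - a ≠ 0 := sub_ne_zero.2 (Ne.symm h)
        rw [Prod.ext_iff]
        refine ⟨?_, by simp⟩
        simp only [smul_eq_mul, Prod.smul_mk]
        field_simp
        ring
      · simp [Prod.ext_iff]
  · -- negativity
    intro hQy
    constructor
    · rw [ha]; nlinarith [mul_pos hδn hlog]
    · apply div_neg_of_neg_of_pos _ hQ0
      exact mul_neg_of_pos_of_neg hωδ (by linarith)
end

section
/- Let û : ℝ → ℝ be continuous and nonnegative, let m ≥ 1 and i ≥ 1 be integers, and for each integer n define Û_n = ⌈(û(n−1)+û(n))/2⌉ if ∫_{n−1}^{n} û ≤ (û(n−1)+û(n))/2, and Û_n = ⌈ sup_{t ∈ [n−1, n]} û(t) ⌉ otherwise. Define the m-periodic release size Û_{m,i} = Σ_{n=(i−1)m+1}^{im} Û_n and the excess-estimate release size Ũ_{m,i} = m·⌈ sup_{t ∈ [(i−1)m, im]} û(t) ⌉. Then Û_{m,i} ≤ Ũ_{m,i}; consequently Σ_i Û_{m,i} ≤ Σ_i Ũ_{m,i}, i.e. the excess-estimate m-periodic strategy requires at least as many released insects as the aggregated daily suboptimal impulses. -/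
lemma aux_main (uh : ℝ → ℝ) (hc : Continuous uh)
    (m : ℕ) (hm : 1 ≤ m)
    (Uhat : ℕ → ℝ)
    (hU : ∀ n : ℕ, Uhat n =
      if (∫ t in ((n : ℝ) - 1)..(n : ℝ), uh t)
            ≤ (uh ((n : ℝ) - 1) + uh (n : ℝ)) / 2
      then (⌈(uh ((n : ℝ) - 1) + uh (n : ℝ)) / 2⌉ : ℝ)
      else (⌈sSup (uh '' Set.Icc ((n : ℝ) - 1) (n : ℝ))⌉ : ℝ))
    (i : ℕ) (hi : 1 ≤ i) :
    ∑ n ∈ Finset.Icc ((i - 1) * m + 1) (i * m), Uhat n ≤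
        (m : ℝ) * (⌈sSup (uh '' Set.Icc (((i : ℝ) - 1) * m) ((i : ℝ) * m))⌉ : ℝ) := by
  set a : ℝ := ((i : ℝ) - 1) * m
  set b : ℝ := (i : ℝ) * m
  have hab : a ≤ b := by
    have : (i : ℝ) - 1 ≤ (i : ℝ) := by linarith
    exact mul_le_mul_of_nonneg_right this (by positivity)
  have hbdd : BddAbove (uh '' Set.Icc a b) :=
    (isCompact_Icc.image hc).bddAbove
  set S : ℝ := sSup (uh '' Set.Icc a b) with hS
  have key : ∀ n ∈ Finset.Icc ((i - 1) * m + 1) (i * m), Uhat n ≤ (⌈S⌉ : ℝ) := by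
    intro n hn
    rw [Finset.mem_Icc] at hn
    obtain ⟨hn1, hn2⟩ := hn
    have hcast : ((i - 1 : ℕ) : ℝ) = (i : ℝ) - 1 := by
      push_cast [Nat.cast_sub hi]; ring
    have hsub : Set.Icc ((n : ℝ) - 1) (n : ℝ) ⊆ Set.Icc a b := by
      apply Set.Icc_subset_Icc
      · have : ((i - 1) * m + 1 : ℕ) ≤ n := hn1
        have : ((i - 1) * m + 1 : ℝ) ≤ (n : ℝ) := by exact_mod_cast this
        simp only [a]; linarith
      · have : (n : ℝ) ≤ ((i * m : ℕ) : ℝ) := by exact_mod_cast hn2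
        simpa [b] using this
    have hne : ((n : ℝ) - 1) ≤ (n : ℝ) := by linarith
    have hmem1 : (n : ℝ) - 1 ∈ Set.Icc a b := hsub ⟨le_refl _, hne⟩
    have hmem2 : (n : ℝ) ∈ Set.Icc a b := hsub ⟨hne, le_refl _⟩
    have h1 : uh ((n : ℝ) - 1) ≤ S := le_csSup hbdd ⟨_, hmem1, rfl⟩
    have h2 : uh (n : ℝ) ≤ S := le_csSup hbdd ⟨_, hmem2, rfl⟩
    rw [hU n]
    split_ifs with h
    · have := Int.ceil_le_ceil (R := ℝ)
        (by linarith : (uh ((n : ℝ) - 1) + uh (n : ℝ)) / 2 ≤ S)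
      exact_mod_cast this
    · have hle : sSup (uh '' Set.Icc ((n : ℝ) - 1) (n : ℝ)) ≤ S :=
        csSup_le_csSup hbdd ⟨uh (n : ℝ), ⟨_, ⟨hne, le_refl _⟩, rfl⟩⟩
          (Set.image_mono hsub)
      exact_mod_cast Int.ceil_le_ceil hle
  calc ∑ n ∈ Finset.Icc ((i - 1) * m + 1) (i * m), Uhat n
      ≤ (Finset.Icc ((i - 1) * m + 1) (i * m)).card • (⌈S⌉ : ℝ) :=
        Finset.sum_le_card_nsmul _ _ _ key
    _ = (m : ℝ) * (⌈S⌉ : ℝ) := by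
        rw [Nat.card_Icc]
        have : i * m + 1 - ((i - 1) * m + 1) = m := by
          have : (i - 1) * m + m = i * m := by
            cases i with
            | zero => omega
            | succ k => simp [Nat.succ_sub_one, Nat.succ_mul]
          omega
        rw [this, nsmul_eq_mul]

/-- the excess-estimate m-periodic release size
Ũ_{m,i} = m·⌈sup_{[(i−1)m, im]} û⌉ dominates the aggregated daily suboptimal
impulses Û_{m,i} = Σ_{n=(i−1)m+1}^{im} Û_n; consequently the same holds for
the totals over any range of periods i. -/
theorem excess_estimate_dominates_aggregated_impulses
    (uh : ℝ → ℝ) (hc : Continuous uh) (hnn : ∀ t, 0 ≤ uh t)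
    (m : ℕ) (hm : 1 ≤ m)
    (Uhat : ℕ → ℝ)
    (hU : ∀ n : ℕ, Uhat n =
      if (∫ t in ((n : ℝ) - 1)..(n : ℝ), uh t)
            ≤ (uh ((n : ℝ) - 1) + uh (n : ℝ)) / 2
      then (⌈(uh ((n : ℝ) - 1) + uh (n : ℝ)) / 2⌉ : ℝ)
      else (⌈sSup (uh '' Set.Icc ((n : ℝ) - 1) (n : ℝ))⌉ : ℝ)) :
    (∀ i : ℕ, 1 ≤ i →
      ∑ n ∈ Finset.Icc ((i - 1) * m + 1) (i * m), Uhat n ≤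
        (m : ℝ) * (⌈sSup (uh '' Set.Icc (((i : ℝ) - 1) * m) ((i : ℝ) * m))⌉ : ℝ)) ∧
    (∀ I : ℕ,
      ∑ i ∈ Finset.Icc 1 I, ∑ n ∈ Finset.Icc ((i - 1) * m + 1) (i * m), Uhat n ≤
        ∑ i ∈ Finset.Icc 1 I,
          (m : ℝ) * (⌈sSup (uh '' Set.Icc (((i : ℝ) - 1) * m) ((i : ℝ) * m))⌉ : ℝ)) := by
  constructor
  · exact fun i hi => aux_main uh hc m hm Uhat hU i hi
  · intro I
    apply Finset.sum_le_sum
    intro i hi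
    exact aux_main uh hc m hm Uhat hU i (Finset.mem_Icc.mp hi).1
end
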